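/- Let f be a Boolean function of degree r in n variables and let A be an affine subspace of F_2^n of co-dimension k. Then rank_{r-1}(f|_A) ≤ min(n - k, rank_{r-1}(f)), where f|_A is viewed as a Boolean function in n - k variables. -/

import Mathlib

open Finset

/-- A Boolean function in `n` variables. -/
abbrev BF (n : ℕ) := (Fin n → ZMod 2) → ZMod 2

/-- The coefficient, in the algebraic normal form of `f`, of the monomial whose
set of variables is `S` (computed by the Möbius/binary Möbius transform). -/
def anf {n : ℕ} (f : BF n) (S : Finset (Fin n)) : ZMod 2 :=
  ∑ T ∈ S.powerset, f (fun i => if i ∈ T then 1 else 0)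

/-- The algebraic degree of a Boolean function, with `⊥` (i.e. `-∞`) for the zero function. -/
def degB {n : ℕ} (f : BF n) : WithBot ℕ :=
  (Finset.univ.filter (fun S : Finset (Fin n) => anf f S ≠ 0)).sup
    (fun S => (S.card : WithBot ℕ))

/-- `f` is homogeneous of degree `r`: all monomials of its ANF have degree `r`. -/
def Homog {n : ℕ} (f : BF n) (r : ℕ) : Prop :=
  ∀ S : Finset (Fin n), anf f S ≠ 0 → S.card = r

/-- `φ` is an affine map. -/
def IsAffineMap {n m : ℕ} (φ : (Fin m → ZMod 2) → (Fin n → ZMod 2)) : Prop :=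
  ∃ (L : (Fin m → ZMod 2) →ₗ[ZMod 2] (Fin n → ZMod 2)) (b : Fin n → ZMod 2),
    φ = fun x => L x + b

/-- `A` is a degree-drop affine subspace of co-dimension `k` for `f` : `A` is the range of an
injective affine parametrization `φ` defined on `F_2^{n-k}`, and the restriction `f|_A`,
viewed as the Boolean function `f ∘ φ` in `n-k` variables, has degree `< deg f`. -/
def DegreeDropSet {n : ℕ} (f : BF n) (k : ℕ) (A : Set (Fin n → ZMod 2)) : Prop :=
  ∃ φ : (Fin (n - k) → ZMod 2) → (Fin n → ZMod 2),
    IsAffineMap φ ∧ Function.Injective φ ∧ Set.range φ = A ∧ degB (f ∘ φ) < degB f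

/-- `f` has some degree-drop affine subspace of co-dimension `k`. -/
def HasDDS {n : ℕ} (f : BF n) (k : ℕ) : Prop :=
  ∃ A : Set (Fin n → ZMod 2), DegreeDropSet f k A

/-- `SimEq r f g` is the relation `f ∼_{r-1} g` : there are an invertible affine
transformation `x ↦ L x + b` of `F_2^n` and a Boolean function `h` of degree at most `r-1`
such that `g = f ∘ φ + h`. -/
def SimEq {n : ℕ} (r : ℕ) (f g : BF n) : Prop :=
  ∃ (L : (Fin n → ZMod 2) ≃ₗ[ZMod 2] (Fin n → ZMod 2)) (b : Fin n → ZMod 2) (h : BF n),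
    degB h ≤ ((r - 1 : ℕ) : WithBot ℕ) ∧ g = fun x => f (L x + b) + h x

/-- The complement `f^c` of a (homogeneous) Boolean function: each monomial `m` of the ANF
is replaced by the monomial on the complementary set of variables. -/
def bcompl {n : ℕ} (f : BF n) : BF n :=
  fun x => ∑ S ∈ Finset.univ.filter (fun S : Finset (Fin n) => anf f S ≠ 0), ∏ i ∈ Sᶜ, x i

/-- Discrete derivative of `f` in direction `a`. -/
def deriv1 {n : ℕ} (a : Fin n → ZMod 2) (f : BF n) : BF n :=
  fun x => f (x + a) + f x

/-- `a` is a fast point of `f` : `a ≠ 0` and `deg (D_a f) < deg f - 1`. -/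
def FastPoint {n : ℕ} (f : BF n) (a : Fin n → ZMod 2) : Prop :=
  a ≠ 0 ∧ degB (deriv1 a f) + 1 < degB f

/-- Membership in `K_{k,r,n}` : `f` is a nonzero homogeneous Boolean function of degree `r`
in `n` variables with no degree-drop affine subspace of co-dimension `k`. -/
def memK {n : ℕ} (k r : ℕ) (f : BF n) : Prop :=
  Homog f r ∧ degB f = (r : WithBot ℕ) ∧ ¬ HasDDS f k

/-- The restriction degree stability of `f` : the largest `k` such that `f` has no
degree-drop affine subspace of co-dimension `k`. -/
noncomputable def degStab {n : ℕ} (f : BF n) : ℕ :=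
  sSup {k : ℕ | ¬ HasDDS f k}

/-- `deg_stab(r,n)` : the maximum of `degStab f` over all Boolean functions `f` of
degree `r` in `n` variables. -/
noncomputable def degStabRN (r n : ℕ) : ℕ :=
  sSup {d : ℕ | ∃ f : BF n, degB f = (r : WithBot ℕ) ∧ d = degStab f}

/-- `g` depends only on the variables in `S`. -/
def DependsOnlyOn {n : ℕ} (g : BF n) (S : Finset (Fin n)) : Prop :=
  ∀ x y : Fin n → ZMod 2, (∀ i ∈ S, x i = y i) → g x = g y

/-- `rank_{r-1}(f)` : the minimum `m` such that some Boolean function `g` depending on only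
`m` of the variables satisfies `f ∼_{r-1} g`. -/
noncomputable def rankB {n : ℕ} (r : ℕ) (f : BF n) : ℕ :=
  sInf {m : ℕ | ∃ g : BF n, SimEq r f g ∧
    ∃ S : Finset (Fin n), S.card = m ∧ DependsOnlyOn g S}

/-- Iterated discrete derivative `D_{a_1}(D_{a_2}(⋯ D_{a_k} f))` along a list of directions. -/
def derivList {n : ℕ} : List (Fin n → ZMod 2) → BF n → BF n
  | [], f => f
  | a :: l, f => deriv1 a (derivList l f)
def pt {n : ℕ} (T : Finset (Fin n)) : Fin n → ZMod 2 := fun i => if i ∈ T then 1 else 0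

lemma zmod2_cases (a : ZMod 2) : a = 0 ∨ a = 1 := by fin_cases a; exacts [Or.inl rfl, Or.inr rfl]

lemma pt_supp {n : ℕ} (x : Fin n → ZMod 2) : pt (univ.filter fun i => x i = 1) = x := by
  funext i
  rcases zmod2_cases (x i) with h | h <;> simp [pt, h]

lemma prod_pt {n : ℕ} (S U : Finset (Fin n)) :
    (∏ i ∈ S, pt U i) = if S ⊆ U then 1 else 0 := by
  split_ifs with h
  · exact Finset.prod_eq_one fun i hi => by simp [pt, h hi]
  · obtain ⟨i, hiS, hiU⟩ := Finset.not_subset.mp h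
    exact Finset.prod_eq_zero hiS (by simp [pt, hiU])

lemma two_pow_zmod2 (c : ℕ) : ((2 ^ c : ℕ) : ZMod 2) = if c = 0 then 1 else 0 := by
  cases c with
  | zero => simp
  | succ c =>
    simp only [Nat.succ_ne_zero, if_false]
    push_cast [pow_succ]
    rw [show ((2:ZMod 2) = 0) from rfl, mul_zero]

lemma anf_pt {n : ℕ} (f : BF n) (S : Finset (Fin n)) :
    anf f S = ∑ T ∈ S.powerset, f (pt T) := rfl

theorem mobius {n : ℕ} (f : BF n) (x : Fin n → ZMod 2) :
    f x = ∑ S : Finset (Fin n), anf f S * ∏ i ∈ S, x i := by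
  rw [← pt_supp x]
  set U := univ.filter fun i => x i = 1 with hU
  clear_value U
  have h1 : ∀ S : Finset (Fin n), anf f S * ∏ i ∈ S, pt U i
      = if S ⊆ U then anf f S else 0 := by
    intro S; rw [prod_pt]; split_ifs <;> simp
  simp only [h1]
  rw [Finset.sum_ite, Finset.sum_const_zero, add_zero]
  have h2 : univ.filter (· ⊆ U) = U.powerset := by
    ext S; simp [Finset.mem_powerset]
  rw [h2]
  simp only [anf_pt]
  rw [Finset.sum_comm' (t' := U.powerset) (s' := fun T => Finset.Icc T U)
    (by intro S T
        simp only [Finset.mem_powerset, Finset.mem_Icc, Finset.mem_univ, true_and]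
        constructor
        · rintro ⟨h1, h2⟩; exact ⟨⟨h2, h1⟩, h2.trans h1⟩
        · rintro ⟨⟨h1, h2⟩, _⟩; exact ⟨h2, h1⟩)]
  have h3 : ∀ T ∈ U.powerset, ∑ _S ∈ Finset.Icc T U, f (pt T)
      = if T = U then f (pt T) else 0 := by
    intro T hT
    rw [Finset.mem_powerset] at hT
    rw [Finset.sum_const, Finset.card_Icc_finset hT, nsmul_eq_mul, two_pow_zmod2]
    rcases eq_or_ne T U with h | h
    · simp [h]
    · have : U.card - T.card ≠ 0 := by
        have := Finset.card_lt_card (lt_of_le_of_ne hT h)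
        omega
      simp [this, h]
  rw [Finset.sum_congr rfl h3, Finset.sum_ite_eq' U.powerset U (fun T => f (pt T))]
  simp

lemma degB_le_iff {n : ℕ} (f : BF n) (d : ℕ) :
    degB f ≤ (d : WithBot ℕ) ↔ ∀ S : Finset (Fin n), anf f S ≠ 0 → S.card ≤ d := by
  rw [degB, Finset.sup_le_iff]
  constructor
  · intro h S hS
    exact_mod_cast h S (by simp [hS])
  · intro h S hS
    rw [Finset.mem_filter] at hS
    exact_mod_cast h S hS.2

/-- `f` sums to zero over every affine cube of dimension `d+1`. -/
def ZeroCubes {n : ℕ} (d : ℕ) (f : BF n) : Prop :=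
  ∀ c : (Fin (d+1) → ZMod 2) → (Fin n → ZMod 2), IsAffineMap c →
    ∑ y : Fin (d+1) → ZMod 2, f (c y) = 0

lemma zeroCubes_of_degB_le {n d : ℕ} {f : BF n} (hf : degB f ≤ (d : WithBot ℕ)) :
    ZeroCubes d f := by
  rintro c ⟨L, b, rfl⟩
  have hm : ∀ y, f (L y + b) = ∑ S : Finset (Fin n), anf f S * ∏ i ∈ S, (L y + b) i :=
    fun y => mobius f _
  simp only [hm]
  rw [Finset.sum_comm]
  refine Finset.sum_eq_zero fun S _ => ?_
  rcases eq_or_ne (anf f S) 0 with h0 | h0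
  · simp [h0]
  · -- |S| ≤ d < d+1, find a period v
    have hcard : S.card ≤ d := (degB_le_iff f d).mp hf S h0
    set Λ : ((Fin (d+1) → ZMod 2) →ₗ[ZMod 2] ({x // x ∈ S} → ZMod 2)) :=
      (LinearMap.funLeft (ZMod 2) (ZMod 2) (fun i : {x // x ∈ S} => (i : Fin n))).comp L with hΛ
    have hninj : ¬ Function.Injective Λ := by
      intro hinj
      have := Fintype.card_le_of_injective Λ hinj
      rw [Fintype.card_fun, Fintype.card_fun] at this
      simp only [ZMod.card, Fintype.card_fin, Fintype.card_coe] at this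
      have := (Nat.pow_le_pow_iff_right (by norm_num : 1 < 2)).mp this
      omega
    rw [Function.not_injective_iff] at hninj
    obtain ⟨y₁, y₂, heq, hne⟩ := hninj
    set v := y₁ + y₂ with hv
    have hvne : v ≠ 0 := by
      intro h
      apply hne
      have : y₁ + y₂ + y₂ = y₂ := by rw [← hv, h, zero_add]
      rwa [add_assoc, CharTwo.add_self_eq_zero, add_zero] at this
    have hΛv : ∀ i ∈ S, L v i = 0 := by
      intro i hi
      have : Λ v = 0 := by
        funext j
        have := congrFun heq j
        simp only [hv, map_add, Pi.add_apply, Pi.zero_apply, this]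
        exact CharTwo.add_self_eq_zero _
      have := congrFun this ⟨i, hi⟩
      simpa [hΛ, LinearMap.funLeft] using this
    refine Finset.sum_ninvolution (fun y => y + v) ?_ ?_ (fun _ => Finset.mem_univ _) ?_
    · intro y
      have : (∏ i ∈ S, (L (y + v) + b) i) = ∏ i ∈ S, (L y + b) i := by
        refine Finset.prod_congr rfl fun i hi => ?_
        simp [map_add, hΛv i hi]
      rw [this, CharTwo.add_self_eq_zero]
    · intro y _
      intro h
      apply hvne
      have := congrArg (· + (-y)) h
      simpa [add_assoc, add_comm] using this
    · intro y
      show y + v + v = y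
      rw [add_assoc, CharTwo.add_self_eq_zero, add_zero]

lemma degB_le_of_zeroCubes {n d : ℕ} {f : BF n} (h : ZeroCubes d f) :
    degB f ≤ (d : WithBot ℕ) := by
  rw [degB_le_iff]
  intro S hS
  by_contra hcd
  push_neg at hcd
  apply hS
  obtain ⟨S', hS'sub, hS'⟩ := Finset.exists_subset_card_eq (show d + 1 ≤ S.card from hcd)
  -- enumeration of S'
  have hcards : Fintype.card {x // x ∈ S'} = d + 1 := by rw [Fintype.card_coe, hS']
  set σ : Fin (d+1) ≃ {x // x ∈ S'} := (Fintype.equivFinOfCardEq hcards).symm with hσ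
  -- the linear part
  set Lc : (Fin (d+1) → ZMod 2) →ₗ[ZMod 2] (Fin n → ZMod 2) :=
    LinearMap.pi (fun i : Fin n =>
      if hmem : i ∈ S' then
        (LinearMap.proj (σ.symm ⟨i, hmem⟩) : (Fin (d+1) → ZMod 2) →ₗ[ZMod 2] ZMod 2)
      else 0) with hLc
  have hLcapp : ∀ y i, Lc y i = if hmem : i ∈ S' then y (σ.symm ⟨i, hmem⟩) else 0 := by
    intro y i
    rw [hLc, LinearMap.pi_apply]
    split_ifs with hmem <;> simp
  -- rewrite anf as double sum
  rw [anf_pt]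
  rw [Finset.sum_nbij' (i := fun T => (T \ S', T ∩ S'))
    (j := fun p : Finset (Fin n) × Finset (Fin n) => p.1 ∪ p.2)
    (t := (S \ S').powerset ×ˢ S'.powerset)
    (g := fun p => f (pt (p.1 ∪ p.2)))
    (by intro T hT
        rw [Finset.mem_powerset] at hT
        simp only [Finset.mem_product, Finset.mem_powerset]
        constructor
        · exact Finset.sdiff_subset_sdiff hT (le_refl _)
        · exact Finset.inter_subset_right)
    (by intro p hp
        simp only [Finset.mem_product, Finset.mem_powerset] at hp
        rw [Finset.mem_powerset]
        exact Finset.union_subset (hp.1.trans (Finset.sdiff_subset)) (hp.2.trans hS'sub))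
    (by intro T _
        ext i
        simp only [Finset.mem_union, Finset.mem_sdiff, Finset.mem_inter]
        tauto)
    (by intro p hp
        simp only [Finset.mem_product, Finset.mem_powerset] at hp
        have h1 : ∀ i ∈ p.1, i ∉ S' := fun i hi => (Finset.mem_sdiff.mp (hp.1 hi)).2
        have h2 : ∀ i ∈ p.2, i ∈ S' := fun i hi => hp.2 hi
        have e1 : (p.1 ∪ p.2) \ S' = p.1 := by
          ext i
          simp only [Finset.mem_sdiff, Finset.mem_union]
          constructor
          · rintro ⟨hi | hi, hn⟩
            · exact hi
            · exact absurd (h2 i hi) hn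
          · intro hi; exact ⟨Or.inl hi, h1 i hi⟩
        have e2 : (p.1 ∪ p.2) ∩ S' = p.2 := by
          ext i
          simp only [Finset.mem_inter, Finset.mem_union]
          constructor
          · rintro ⟨hi | hi, hn⟩
            · exact absurd hn (h1 i hi)
            · exact hi
          · intro hi; exact ⟨Or.inr hi, h2 i hi⟩
        simp [e1, e2])
    (by intro T _
        have : T \ S' ∪ T ∩ S' = T := Finset.sdiff_union_inter T S'
        simp only [this])]
  rw [Finset.sum_product]
  refine Finset.sum_eq_zero fun R hR => ?_
  rw [Finset.mem_powerset] at hR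
  have hRS' : ∀ i ∈ R, i ∉ S' := fun i hi => (Finset.mem_sdiff.mp (hR hi)).2
  -- inner sum equals a cube sum
  have key : ∑ Q ∈ S'.powerset, f (pt (R ∪ Q))
      = ∑ y : Fin (d+1) → ZMod 2, f (Lc y + pt R) := by
    refine Finset.sum_nbij' (i := fun Q => fun j => pt Q (σ j))
      (j := fun y => Finset.image (fun j => ((σ j : {x // x ∈ S'}) : Fin n))
        (univ.filter (fun j => y j = 1)))
      (fun _ _ => Finset.mem_univ _) ?_ ?_ ?_ ?_
    · intro y _
      rw [Finset.mem_powerset]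
      intro i hi
      simp only [Finset.mem_image] at hi
      obtain ⟨j, _, rfl⟩ := hi
      exact (σ j).2
    · intro Q hQ
      rw [Finset.mem_powerset] at hQ
      ext i
      simp only [Finset.mem_image, Finset.mem_filter, Finset.mem_univ, true_and]
      constructor
      · rintro ⟨j, hj, rfl⟩
        simp only [pt] at hj
        split_ifs at hj with hmem
        · exact hmem
        · exact absurd hj.symm one_ne_zero
      · intro hi
        refine ⟨σ.symm ⟨i, hQ hi⟩, ?_, by simp⟩
        simp [pt, hi]
    · intro y _
      funext j
      simp only [pt]
      rcases zmod2_cases (y j) with hy | hy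
      · rw [hy]
        rw [if_neg]
        intro hmem
        simp only [Finset.mem_image, Finset.mem_filter, Finset.mem_univ, true_and] at hmem
        obtain ⟨j', hj', hjj'⟩ := hmem
        have : σ j' = σ j := Subtype.ext hjj'
        rw [σ.injective this] at hj'
        rw [hy] at hj'
        exact one_ne_zero hj'.symm
      · rw [hy, if_pos]
        simp only [Finset.mem_image, Finset.mem_filter, Finset.mem_univ, true_and]
        exact ⟨j, hy, rfl⟩
    · intro Q hQ
      rw [Finset.mem_powerset] at hQ
      congr 1
      funext i
      rw [Pi.add_apply, hLcapp]
      by_cases hmem : i ∈ S'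
      · rw [dif_pos hmem]
        have hσ : ((σ (σ.symm ⟨i, hmem⟩) : {x // x ∈ S'}) : Fin n) = i := by simp
        simp only [pt, hσ]
        have hiR : i ∉ R := fun hc => hRS' i hc hmem
        simp only [Finset.mem_union, hiR, if_neg hiR, add_zero]
        by_cases hiQ : i ∈ Q
        · simp [hiQ]
        · simp [hiQ, hiR]
      · rw [dif_neg hmem, zero_add]
        have hiQ : i ∉ Q := fun hc => hmem (hQ hc)
        simp only [pt, Finset.mem_union, hiQ]
        by_cases hiR : i ∈ R <;> simp [hiR, hiQ]
  rw [key]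
  exact h _ ⟨Lc, pt R, rfl⟩

lemma isAffineMap_comp {m n p : ℕ} {φ : (Fin m → ZMod 2) → (Fin n → ZMod 2)}
    {c : (Fin p → ZMod 2) → (Fin m → ZMod 2)}
    (hφ : IsAffineMap φ) (hc : IsAffineMap c) : IsAffineMap (φ ∘ c) := by
  obtain ⟨L1, b1, rfl⟩ := hφ
  obtain ⟨L2, b2, rfl⟩ := hc
  exact ⟨L1.comp L2, L1 b2 + b1, by funext x; simp [map_add, add_assoc]⟩

lemma anf_eq_zero_of_degB_bot {n : ℕ} {f : BF n} (h : degB f = ⊥) :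
    ∀ S, anf f S = 0 := by
  intro S
  by_contra hS
  have hmem : S ∈ univ.filter (fun S : Finset (Fin n) => anf f S ≠ 0) := by simp [hS]
  have := Finset.le_sup (f := fun S : Finset (Fin n) => (S.card : WithBot ℕ)) hmem
  rw [← degB, h, le_bot_iff] at this
  exact (WithBot.coe_ne_bot) this

lemma eq_zero_of_degB_bot {n : ℕ} {f : BF n} (h : degB f = ⊥) : ∀ x, f x = 0 := by
  intro x
  rw [mobius f x]
  exact Finset.sum_eq_zero fun S _ => by rw [anf_eq_zero_of_degB_bot h S, zero_mul]

lemma degB_comp_affine {m n : ℕ} (f : BF n) (φ : (Fin m → ZMod 2) → (Fin n → ZMod 2))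
    (hφ : IsAffineMap φ) : degB (f ∘ φ) ≤ degB f := by
  cases hd : degB f with
  | bot =>
    have hz : ∀ x, (f ∘ φ) x = 0 := fun x => eq_zero_of_degB_bot hd (φ x)
    have : ∀ S, anf (f ∘ φ) S = 0 := fun S =>
      Finset.sum_eq_zero fun T _ => hz _
    rw [degB]
    have : univ.filter (fun S : Finset (Fin m) => anf (f ∘ φ) S ≠ 0) = ∅ := by
      ext S; simp [this S]
    rw [this, Finset.sup_empty]
  | coe d =>
    apply degB_le_of_zeroCubes
    intro c hc
    exact zeroCubes_of_degB_le (le_of_eq hd) (φ ∘ c) (isAffineMap_comp hφ hc)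

lemma add_self_zmod2 {α : Type*} [AddCommMonoid α] [Module (ZMod 2) α] (a : α) : a + a = 0 := by
  rw [← two_smul (ZMod 2) a, show (2 : ZMod 2) = 0 from rfl, zero_smul]

lemma reduce_vars {N M : ℕ} (g : BF N) (S : Finset (Fin N)) (hdep : DependsOnlyOn g S)
    (θ : (Fin M → ZMod 2) → (Fin N → ZMod 2)) (hθ : IsAffineMap θ) :
    ∃ (E : (Fin M → ZMod 2) ≃ₗ[ZMod 2] (Fin M → ZMod 2)) (S' : Finset (Fin M)),
      S'.card ≤ S.card ∧ DependsOnlyOn (fun x => g (θ (E x))) S' := by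
  classical
  obtain ⟨Nl, dv, rfl⟩ := hθ
  set Λ : ((Fin M → ZMod 2) →ₗ[ZMod 2] ({x // x ∈ S} → ZMod 2)) :=
    (LinearMap.funLeft (ZMod 2) (ZMod 2) (fun i : {x // x ∈ S} => (i : Fin N))).comp Nl with hΛ
  set W := LinearMap.ker Λ with hW
  -- periodicity
  have hper : ∀ (y : Fin M → ZMod 2) (w : Fin M → ZMod 2), w ∈ W →
      g (Nl (y + w) + dv) = g (Nl y + dv) := by
    intro y w hw
    apply hdep
    intro i hi
    have hΛw : Λ w = 0 := hw
    have : Nl w i = 0 := congrFun hΛw ⟨i, hi⟩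
    simp [map_add, this]
  obtain ⟨U, hcompl⟩ := Submodule.exists_isCompl W
  set dU := Module.finrank (ZMod 2) U with hdU
  set dW := Module.finrank (ZMod 2) W with hdW
  have hsum : dW + dU = M := by
    rw [hdU, hdW]
    rw [Submodule.finrank_add_eq_of_isCompl hcompl, Module.finrank_fintype_fun_eq_card,
      Fintype.card_fin]
  have hdUle : dU ≤ S.card := by
    have h1 := LinearMap.finrank_range_add_finrank_ker Λ
    have h2 : Module.finrank (ZMod 2) (LinearMap.range Λ) ≤ S.card := by
      have := Submodule.finrank_le (LinearMap.range Λ)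
      rwa [Module.finrank_fintype_fun_eq_card, Fintype.card_coe] at this
    rw [Module.finrank_fintype_fun_eq_card, Fintype.card_fin] at h1
    have h3 : Module.finrank (ZMod 2) (LinearMap.ker Λ) = dW := by rw [hdW, hW]
    omega
  -- the equivalence
  set e0 : Fin M ≃ (Fin dU ⊕ Fin dW) :=
    (finCongr (by omega : M = dU + dW)).trans finSumFinEquiv.symm with he0
  set eU : (Fin dU → ZMod 2) ≃ₗ[ZMod 2] U := (Module.finBasis (ZMod 2) U).equivFun.symm
  set eW : (Fin dW → ZMod 2) ≃ₗ[ZMod 2] W := (Module.finBasis (ZMod 2) W).equivFun.symm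
  set E : (Fin M → ZMod 2) ≃ₗ[ZMod 2] (Fin M → ZMod 2) :=
    ((LinearEquiv.funCongrLeft (ZMod 2) (ZMod 2) e0).symm.trans
      ((LinearEquiv.sumArrowLequivProdArrow _ _ _ _).trans
        ((eU.prodCongr eW).trans (Submodule.prodEquivOfIsCompl U W hcompl.symm)))) with hE
  have hEapply : ∀ z : Fin M → ZMod 2,
      E z = ((eU (fun j => z (e0.symm (Sum.inl j))) : U) : Fin M → ZMod 2) +
        ((eW (fun j => z (e0.symm (Sum.inr j))) : W) : Fin M → ZMod 2) := by
    intro z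
    rfl
  refine ⟨E, Finset.image (fun j : Fin dU => e0.symm (Sum.inl j)) univ, ?_, ?_⟩
  · calc (Finset.image (fun j : Fin dU => e0.symm (Sum.inl j)) univ).card
        ≤ (univ : Finset (Fin dU)).card := Finset.card_image_le
      _ = dU := by simp
      _ ≤ S.card := hdUle
  · intro x y hxy
    have hz : ∀ j : Fin dU, (x + y) (e0.symm (Sum.inl j)) = 0 := by
      intro j
      have := hxy (e0.symm (Sum.inl j)) (Finset.mem_image_of_mem _ (Finset.mem_univ j))
      rw [Pi.add_apply, this, CharTwo.add_self_eq_zero]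
    have hmem : E (x + y) ∈ W := by
      rw [hEapply]
      have h0 : (fun j => (x + y) (e0.symm (Sum.inl j))) = 0 := funext hz
      rw [h0, map_zero]
      simp only [Submodule.coe_zero, zero_add]
      exact (eW _).2
    have hxe : E x = E y + E (x + y) := by
      rw [map_add, add_comm (E x), ← add_assoc, add_self_zmod2, zero_add]
    show g (Nl (E x) + dv) = g (Nl (E y) + dv)
    rw [hxe]
    exact hper (E y) _ hmem

lemma degB_zero_bot {n : ℕ} : degB (fun _ : Fin n → ZMod 2 => (0 : ZMod 2)) = ⊥ := by
  rw [degB]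
  have : univ.filter (fun S : Finset (Fin n) =>
      anf (fun _ : Fin n → ZMod 2 => (0 : ZMod 2)) S ≠ 0) = ∅ := by
    ext S
    simp [anf]
  rw [this, Finset.sup_empty]

lemma dependsOnlyOn_mono {n : ℕ} {g : BF n} {S T : Finset (Fin n)} (hST : S ⊆ T)
    (h : DependsOnlyOn g S) : DependsOnlyOn g T :=
  fun x y hxy => h x y fun i hi => hxy i (hST hi)

lemma self_mem_rank_set {n : ℕ} (r : ℕ) (f : BF n) :
    Fintype.card (Fin n) ∈ {m : ℕ | ∃ g : BF n, SimEq r f g ∧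
      ∃ S : Finset (Fin n), S.card = m ∧ DependsOnlyOn g S} := by
  refine ⟨f, ⟨LinearEquiv.refl _ _, 0, fun _ => 0, ?_, ?_⟩, univ, ?_, ?_⟩
  · rw [degB_zero_bot]; exact bot_le
  · funext x; simp
  · exact Finset.card_univ
  · intro x y hxy
    have : x = y := funext fun i => hxy i (Finset.mem_univ i)
    rw [this]

/-- STATEMENT 12: for a function `f` of degree `r` in `n` variables and an affine subspace
`A` of co-dimension `k` (given by an injective affine parametrization `φ` of `F₂^{n-k}`),
the restriction `f|_A = f ∘ φ`, viewed in `n-k` variables, satisfies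
`rank_{r-1}(f|_A) ≤ min (n-k) (rank_{r-1} f)`. -/
theorem stmt12 {n r k : ℕ} (hk : k ≤ n)
    (f : BF n) (hdeg : degB f = (r : WithBot ℕ))
    (φ : (Fin (n - k) → ZMod 2) → (Fin n → ZMod 2))
    (hφ : IsAffineMap φ) (hinj : Function.Injective φ) :
    rankB r (f ∘ φ) ≤ min (n - k) (rankB r f) := by
  have htriv : rankB r (f ∘ φ) ≤ n - k := by
    apply Nat.sInf_le
    have := self_mem_rank_set r (f ∘ φ)
    rwa [Fintype.card_fin] at this
  refine le_min htriv ?_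
  set m0 := rankB r f with hm0
  rcases le_or_gt (n - k) m0 with hcase | hcase
  · exact htriv.trans hcase
  · -- m0 < n - k
    have hne : {m : ℕ | ∃ g : BF n, SimEq r f g ∧
        ∃ S : Finset (Fin n), S.card = m ∧ DependsOnlyOn g S}.Nonempty :=
      ⟨_, self_mem_rank_set r f⟩
    have hmem := Nat.sInf_mem hne
    obtain ⟨g, ⟨L, b, h, hh, hg⟩, S, hScard, hdep⟩ := hmem
    -- θ : the affine map into the source of g
    set θ : (Fin (n - k) → ZMod 2) → (Fin n → ZMod 2) := fun x => L.symm (φ x + b) with hθdef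
    have hθ : IsAffineMap θ := by
      obtain ⟨Lφ, bφ, hφeq⟩ := hφ
      refine ⟨(L.symm : (Fin n → ZMod 2) ≃ₗ[ZMod 2] (Fin n → ZMod 2)).toLinearMap.comp Lφ,
        L.symm (bφ + b), ?_⟩
      funext x
      simp [hθdef, hφeq, map_add, add_assoc]
    obtain ⟨E, S', hS'card, hdep'⟩ := reduce_vars g S hdep θ hθ
    -- the new function
    have key : (fun x => g (θ (E x))) = fun x => (f ∘ φ) (E x + 0) + h (θ (E x)) := by
      funext x
      rw [hg]
      simp only [hθdef, Function.comp_apply, add_zero]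
      rw [LinearEquiv.apply_symm_apply, add_assoc, add_self_zmod2, add_zero]
    have hθE : IsAffineMap (fun x => θ (E x)) := by
      have hEaff : IsAffineMap (fun x : Fin (n - k) → ZMod 2 => E x) :=
        ⟨E.toLinearMap, 0, by funext x; simp⟩
      exact isAffineMap_comp (φ := θ) (c := fun x => E x) hθ hEaff
    have hh' : degB (fun x => h (θ (E x))) ≤ ((r - 1 : ℕ) : WithBot ℕ) :=
      le_trans (degB_comp_affine h (fun x => θ (E x)) hθE) hh
    -- pad S' to have card m0
    have hSm : S.card = m0 := hScard
    have hS'le : S'.card ≤ m0 := hSm ▸ hS'card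
    obtain ⟨S'', hsub, hsub2, hS''card⟩ := Finset.exists_subsuperset_card_eq
      (Finset.subset_univ S') hS'le (by rw [Finset.card_univ, Fintype.card_fin]; omega)
    apply Nat.sInf_le
    exact ⟨fun x => g (θ (E x)), ⟨E, 0, fun x => h (θ (E x)), hh', key⟩, S'', hS''card,
      dependsOnlyOn_mono hsub hdep'⟩
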